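/- (Theorem 1, sufficiency form) Fix N ≥ 1, B > 0, T > 0 and, for each i, reals 0 < a_{i1} ≤ a_{i2} and d_{i1}, d_{i2} ≥ 0 with d_{i1} + d_{i2} > 0, and let g_i(s) = B·s·(a_{i1}·2^((d_{i1}+d_{i2})/(B·s)) + (a_{i2} − a_{i1})·2^(d_{i2}/(B·s)) − a_{i2}) with derivative g_i′. Suppose t* ∈ ℝ^N satisfies t*_i > 0 for all i, Σ_{i=1}^N t*_i = T, and there exists α ∈ ℝ with g_i′(t*_i) = −α for every i. Then for every t ∈ ℝ^N with t_i > 0 for all i and Σ_{i=1}^N t_i ≤ T, one has Σ_{i=1}^N g_i(t*_i) ≤ Σ_{i=1}^N g_i(t_i); i.e., t* is the optimal time allocation of the energy minimization problem with fixed offloading data. -/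

import Mathlib

/-- Basic inequality: `(1 - v - w) * e^w ≤ 1 - v` for `v, w ≥ 0`. -/
lemma stmt11_key (v w : ℝ) (hv : 0 ≤ v) (hw : 0 ≤ w) :
    (1 - v - w) * Real.exp w ≤ 1 - v := by
  have hE : 1 ≤ Real.exp w := Real.one_le_exp hw
  have h1 : (-w + 1) * Real.exp w ≤ Real.exp (-w) * Real.exp w :=
    mul_le_mul_of_nonneg_right (Real.add_one_le_exp (-w)) (Real.exp_pos w).le
  rw [← Real.exp_add, neg_add_cancel, Real.exp_zero] at h1
  have h2 : v * 1 ≤ v * Real.exp w := mul_le_mul_of_nonneg_left hE hv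
  nlinarith

/-- `(1 - y) * e^y` is antitone on `[0, ∞)`. -/
lemma stmt11_psi {y₁ y₂ : ℝ} (h2 : 0 ≤ y₂) (h12 : y₂ ≤ y₁) :
    (1 - y₁) * Real.exp y₁ ≤ (1 - y₂) * Real.exp y₂ := by
  have hw : 0 ≤ y₁ - y₂ := sub_nonneg.2 h12
  have key := stmt11_key y₂ (y₁ - y₂) h2 hw
  have h3 : ((1 - y₂ - (y₁ - y₂)) * Real.exp (y₁ - y₂)) * Real.exp y₂
      ≤ (1 - y₂) * Real.exp y₂ := mul_le_mul_of_nonneg_right key (Real.exp_pos _).le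
  calc (1 - y₁) * Real.exp y₁
      = ((1 - y₂ - (y₁ - y₂)) * Real.exp (y₁ - y₂)) * Real.exp y₂ := by
        rw [mul_assoc, ← Real.exp_add]; ring_nf
    _ ≤ (1 - y₂) * Real.exp y₂ := h3

/-- The single "term" appearing in `g'`, rewritten via `exp`. -/
lemma stmt11_term_eq (B x s : ℝ) (hB : 0 < B) (hs : s ≠ 0) :
    (B - Real.log 2 * x / s) * Real.exp (Real.log 2 * (x / (B * s)))
      = B * ((1 - Real.log 2 * (x / (B * s))) * Real.exp (Real.log 2 * (x / (B * s)))) := by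
  have : B - Real.log 2 * x / s = B * (1 - Real.log 2 * (x / (B * s))) := by
    field_simp
  rw [this, mul_assoc]

lemma stmt11_y_nonneg (B x s : ℝ) (hB : 0 < B) (hx : 0 ≤ x) (hs : 0 < s) :
    0 ≤ Real.log 2 * (x / (B * s)) := by
  have h2 : (0:ℝ) ≤ Real.log 2 := Real.log_nonneg (by norm_num)
  positivity

/-- Each term of `g'` is bounded above by `B`. -/
lemma stmt11_term_le (B x s : ℝ) (hB : 0 < B) (hx : 0 ≤ x) (hs : 0 < s) :
    (B - Real.log 2 * x / s) * Real.exp (Real.log 2 * (x / (B * s))) ≤ B := by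
  rw [stmt11_term_eq B x s hB hs.ne']
  have hy := stmt11_y_nonneg B x s hB hx hs
  have := stmt11_psi (le_refl (0:ℝ)) hy
  simp only [Real.exp_zero, sub_zero, mul_one] at this
  calc B * ((1 - Real.log 2 * (x / (B * s))) * Real.exp (Real.log 2 * (x / (B * s))))
      ≤ B * 1 := mul_le_mul_of_nonneg_left this hB.le
    _ = B := mul_one B

/-- Each term of `g'` is monotone in `s` on `(0, ∞)`. -/
lemma stmt11_term_mono (B x s u : ℝ) (hB : 0 < B) (hx : 0 ≤ x) (hs : 0 < s) (hsu : s ≤ u) :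
    (B - Real.log 2 * x / s) * Real.exp (Real.log 2 * (x / (B * s)))
      ≤ (B - Real.log 2 * x / u) * Real.exp (Real.log 2 * (x / (B * u))) := by
  have hu : 0 < u := lt_of_lt_of_le hs hsu
  rw [stmt11_term_eq B x s hB hs.ne', stmt11_term_eq B x u hB hu.ne']
  have h2 : (0:ℝ) ≤ Real.log 2 := Real.log_nonneg (by norm_num)
  have hle : Real.log 2 * (x / (B * u)) ≤ Real.log 2 * (x / (B * s)) := by
    gcongr
  have := stmt11_psi (stmt11_y_nonneg B x u hB hx hu) hle
  exact mul_le_mul_of_nonneg_left this hB.le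

/-- Derivative of `s ↦ B s · exp(log 2 · (c/(B s)))`. -/
lemma stmt11_hasDeriv (B c s : ℝ) (hB : 0 < B) (hs : 0 < s) :
    HasDerivAt (fun s : ℝ => B * s * Real.exp (Real.log 2 * (c / (B * s))))
      ((B - Real.log 2 * c / s) * Real.exp (Real.log 2 * (c / (B * s)))) s := by
  have hs0 : s ≠ 0 := hs.ne'
  have hfun : (fun s : ℝ => Real.log 2 * (c / (B * s)))
      = fun s : ℝ => (Real.log 2 * c / B) * s⁻¹ := by
    funext x
    rw [div_eq_mul_inv, mul_inv, div_eq_mul_inv]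
    ring
  have h1 : HasDerivAt (fun s : ℝ => Real.log 2 * (c / (B * s)))
      ((Real.log 2 * c / B) * (-(s ^ 2)⁻¹)) s := by
    rw [hfun]
    exact (hasDerivAt_inv hs0).const_mul _
  have h2 := h1.exp
  have h3 : HasDerivAt (fun s : ℝ => B * s) (B * 1) s := (hasDerivAt_id s).const_mul B
  have h4 := h3.mul h2
  refine h4.congr_deriv ?_
  have hexp : Real.exp (Real.log 2 * (c / (B * s))) ≠ 0 := (Real.exp_pos _).ne'
  have hB0 : B ≠ 0 := hB.ne'
  field_simp
  ring

open Finset in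
/-- Theorem 1, sufficiency form: if `t*` uses the full time budget
`Σᵢ t*ᵢ = T` and the derivatives `gᵢ′(t*ᵢ)` all equal a common value `−α`, then `t*`
minimizes the total offloading energy `Σᵢ gᵢ(tᵢ)` among all positive time allocations
with `Σᵢ tᵢ ≤ T`. -/
theorem stmt_11 (N : ℕ) (hN : 1 ≤ N) (B T : ℝ) (hB : 0 < B) (hT : 0 < T)
    (a₁ a₂ : Fin N → ℝ) (d : Fin N → Fin 2 → ℝ)
    (ha₁ : ∀ i, 0 < a₁ i) (h12 : ∀ i, a₁ i ≤ a₂ i) (hd : ∀ i j, 0 ≤ d i j)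
    (hdpos : ∀ i, 0 < d i 0 + d i 1)
    (g : Fin N → ℝ → ℝ)
    (hg : ∀ i (s : ℝ), g i s =
      B * s * (a₁ i * (2 : ℝ) ^ ((d i 0 + d i 1) / (B * s))
        + (a₂ i - a₁ i) * (2 : ℝ) ^ (d i 1 / (B * s)) - a₂ i))
    (g' : Fin N → ℝ → ℝ)
    (hg' : ∀ i (s : ℝ), g' i s =
      a₁ i * (B - Real.log 2 * (d i 0 + d i 1) / s) * (2 : ℝ) ^ ((d i 0 + d i 1) / (B * s))
        + (a₂ i - a₁ i) * (B - Real.log 2 * (d i 1) / s) * (2 : ℝ) ^ (d i 1 / (B * s))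
        - a₂ i * B)
    (tstar : Fin N → ℝ) (htstar : ∀ i, 0 < tstar i) (htsum : ∑ i, tstar i = T)
    (α : ℝ) (hα : ∀ i, g' i (tstar i) = -α) :
    ∀ t : Fin N → ℝ, (∀ i, 0 < t i) → ∑ i, t i ≤ T →
      ∑ i, g i (tstar i) ≤ ∑ i, g i (t i) := by
  have h2pos : (0:ℝ) < 2 := by norm_num
  -- g' rewritten with exp
  have hg'e : ∀ i (s : ℝ), g' i s =
      a₁ i * ((B - Real.log 2 * (d i 0 + d i 1) / s)
          * Real.exp (Real.log 2 * ((d i 0 + d i 1) / (B * s))))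
        + (a₂ i - a₁ i) * ((B - Real.log 2 * (d i 1) / s)
          * Real.exp (Real.log 2 * (d i 1 / (B * s))))
        - a₂ i * B := by
    intro i s
    rw [hg' i s, Real.rpow_def_of_pos h2pos, Real.rpow_def_of_pos h2pos]
    ring
  -- g' is nonpositive on (0,∞)
  have hg'nonpos : ∀ i (s : ℝ), 0 < s → g' i s ≤ 0 := by
    intro i s hs
    rw [hg'e i s]
    have hD : 0 ≤ d i 0 + d i 1 := (hdpos i).le
    have h1 := stmt11_term_le B (d i 0 + d i 1) s hB hD hs
    have h2 := stmt11_term_le B (d i 1) s hB (hd i 1) hs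
    have ha := (ha₁ i).le
    have hba : 0 ≤ a₂ i - a₁ i := sub_nonneg.2 (h12 i)
    nlinarith
  -- g' is monotone on (0,∞)
  have hg'mono : ∀ i (s u : ℝ), 0 < s → s ≤ u → g' i s ≤ g' i u := by
    intro i s u hs hsu
    rw [hg'e i s, hg'e i u]
    have hD : 0 ≤ d i 0 + d i 1 := (hdpos i).le
    have h1 := stmt11_term_mono B (d i 0 + d i 1) s u hB hD hs hsu
    have h2 := stmt11_term_mono B (d i 1) s u hB (hd i 1) hs hsu
    have ha := (ha₁ i).le
    have hba : 0 ≤ a₂ i - a₁ i := sub_nonneg.2 (h12 i)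
    nlinarith
  -- g i has derivative g' i on (0,∞)
  have hderiv : ∀ i (s : ℝ), 0 < s → HasDerivAt (g i) (g' i s) s := by
    intro i s hs
    have hfun : g i = fun s : ℝ =>
        a₁ i * (B * s * Real.exp (Real.log 2 * ((d i 0 + d i 1) / (B * s))))
        + (a₂ i - a₁ i) * (B * s * Real.exp (Real.log 2 * (d i 1 / (B * s))))
        - a₂ i * B * s := by
      funext x
      rw [hg i x, Real.rpow_def_of_pos h2pos, Real.rpow_def_of_pos h2pos]
      ring
    rw [hfun, hg'e i s]
    have h1 := (stmt11_hasDeriv B (d i 0 + d i 1) s hB hs).const_mul (a₁ i)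
    have h2 := (stmt11_hasDeriv B (d i 1) s hB hs).const_mul (a₂ i - a₁ i)
    have h3 : HasDerivAt (fun s : ℝ => a₂ i * B * s) (a₂ i * B) s := by
      simpa using (hasDerivAt_id s).const_mul (a₂ i * B)
    exact (h1.add h2).sub h3
  -- α is nonnegative
  have hα0 : 0 ≤ α := by
    have i0 : Fin N := ⟨0, hN⟩
    have := hg'nonpos i0 (tstar i0) (htstar i0)
    rw [hα i0] at this
    linarith
  intro t ht htle
  -- tangent line inequality for each coordinate
  have hkey : ∀ i, g i (tstar i) + (-α) * (t i - tstar i) ≤ g i (t i) := by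
    intro i
    rcases lt_trichotomy (t i) (tstar i) with hlt | heq | hgt
    · obtain ⟨c, hc, hceq⟩ := exists_hasDerivAt_eq_slope (g i) (g' i) hlt
        (fun x hx => ((hderiv i x (lt_of_lt_of_le (ht i) hx.1)).continuousAt).continuousWithinAt)
        (fun x hx => hderiv i x (lt_trans (ht i) hx.1))
      have hcpos : 0 < c := lt_trans (ht i) hc.1
      have hle : g' i c ≤ -α := by
        rw [← hα i]; exact hg'mono i c (tstar i) hcpos hc.2.le
      rw [hceq] at hle
      have hpos : 0 < tstar i - t i := by linarith
      rw [div_le_iff₀ hpos] at hle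
      nlinarith
    · rw [heq]; ring_nf; simp
    · obtain ⟨c, hc, hceq⟩ := exists_hasDerivAt_eq_slope (g i) (g' i) hgt
        (fun x hx => ((hderiv i x (lt_of_lt_of_le (htstar i) hx.1)).continuousAt).continuousWithinAt)
        (fun x hx => hderiv i x (lt_trans (htstar i) hx.1))
      have hcpos : 0 < c := lt_trans (htstar i) hc.1
      have hge : -α ≤ g' i c := by
        rw [← hα i]; exact hg'mono i (tstar i) c (htstar i) hc.1.le
      rw [hceq] at hge
      have hpos : 0 < t i - tstar i := by linarith
      rw [le_div_iff₀ hpos] at hge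
      nlinarith
  have hsum := Finset.sum_le_sum (s := Finset.univ) (fun i _ => hkey i)
  have hexp : ∑ i, (g i (tstar i) + (-α) * (t i - tstar i))
      = ∑ i, g i (tstar i) + (-α) * (∑ i, t i - T) := by
    rw [Finset.sum_add_distrib, ← Finset.mul_sum, Finset.sum_sub_distrib, htsum]
  rw [hexp] at hsum
  have hnn : 0 ≤ (-α) * (∑ i, t i - T) :=
    by nlinarith
  linarith
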